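/- Let μ be a σ-finite atomless measure, 1 ≤ p < ∞, and f, g ∈ Lᵖ(μ) with f ≠ g in Lᵖ. Then there exist a constant d ≠ 0 and a measurable set F' of positive finite measure such that |f(x) − d| < |f(x)| and |g(x) − d| > |g(x)| for almost every x ∈ F' (after possibly swapping f and g). -/

import Mathlib

open MeasureTheory ENNReal

private lemma key1 {a d : ℝ} (hd : 0 < d) (h : d < 2 * a) : |a - d| < |a| := by
  have ha : 0 < a := by linarith
  rw [abs_of_pos ha, abs_lt]
  constructor <;> linarith

private lemma key2 {b d : ℝ} (hd : 0 < d) (h : 2 * b < d) : |b| < |b - d| := by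
  nlinarith [sq_abs b, sq_abs (b - d), abs_nonneg b, abs_nonneg (b - d)]

private lemma rat_btwn {a b : ℝ} (h : a < b) : ∃ q : ℚ, q ≠ 0 ∧ a < (q : ℝ) ∧ (q : ℝ) < b := by
  obtain ⟨q, hq1, hq2⟩ := exists_rat_btwn h
  by_cases hq : q = 0
  · subst hq
    obtain ⟨q', hq1', hq2'⟩ := exists_rat_btwn hq1
    refine ⟨q', ?_, hq1', hq2'.trans hq2⟩
    intro h0; subst h0; exact absurd hq2' (by simp)
  · exact ⟨q, hq, hq1, hq2⟩

private lemma aux {Ω : Type*} [MeasurableSpace Ω] (μ : Measure Ω)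
    (p : ℝ≥0∞) (hp : 1 ≤ p) (hp' : p ≠ ∞)
    (f g F G : Ω → ℝ) (hFm : Measurable F) (hGm : Measurable G)
    (hF : MemLp F p μ) (hG : MemLp G p μ)
    (hfF : f =ᵐ[μ] F) (hgG : g =ᵐ[μ] G)
    (r : ℚ) (hr : r ≠ 0) (hpos : μ {x | G x < (r : ℝ) ∧ (r : ℝ) < F x} ≠ 0) :
    ∃ d : ℝ, d ≠ 0 ∧ ∃ F' : Set Ω, MeasurableSet F' ∧ 0 < μ F' ∧ μ F' < ∞ ∧
      ((∀ᵐ x ∂μ, x ∈ F' → |f x - d| < |f x| ∧ |g x| < |g x - d|) ∨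
       (∀ᵐ x ∂μ, x ∈ F' → |g x - d| < |g x| ∧ |f x| < |f x - d|)) := by
  have hp0 : p ≠ 0 := by
    intro h; rw [h] at hp; exact absurd hp (by simp)
  set F' : Set Ω := {x | G x < (r : ℝ) ∧ (r : ℝ) < F x} with hF'
  have hmeas : MeasurableSet F' :=
    (measurableSet_lt hGm measurable_const).inter (measurableSet_lt measurable_const hFm)
  have hposμ : 0 < μ F' := pos_iff_ne_zero.mpr hpos
  rcases lt_or_gt_of_ne (show (r : ℝ) ≠ 0 by exact_mod_cast hr) with hrneg | hrpos
  · -- r < 0 : use d = 2r < 0, second disjunct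
    refine ⟨2 * r, by positivity, F', hmeas, hposμ, ?_, ?_⟩
    · -- finiteness: F' ⊆ {|G| ≥ -r}
      have hsub : F' ⊆ {x | (Real.toNNReal (-(r : ℝ))) ≤ ‖G x‖₊} := by
        intro x hx
        have h1 : (-(r : ℝ)) ≤ ‖G x‖ := by
          have := hx.1
          rw [Real.norm_eq_abs]
          have : -(G x) ≤ |G x| := neg_le_abs _
          linarith [hx.1]
        have h2 : ((Real.toNNReal (-(r : ℝ))) : ℝ) ≤ (‖G x‖₊ : ℝ) := by
          rw [Real.coe_toNNReal _ (by linarith), coe_nnnorm]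
          exact h1
        exact_mod_cast h2
      refine lt_of_le_of_lt (measure_mono hsub) ?_
      exact hG.meas_ge_lt_top hp0 hp' (Real.toNNReal_pos.mpr (by linarith)).ne'
    · right
      filter_upwards [hfF, hgG] with x hfx hgx hx
      obtain ⟨h1, h2⟩ := hx
      constructor
      · rw [hgx, show G x - 2 * (r : ℝ) = -((-(G x)) - (-(2 * (r : ℝ)))) by ring, abs_neg,
          ← abs_neg (G x)]
        exact key1 (by linarith) (by linarith)
      · rw [hfx, show F x - 2 * (r : ℝ) = -((-(F x)) - (-(2 * (r : ℝ)))) by ring, abs_neg,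
          ← abs_neg (F x)]
        exact key2 (by linarith) (by linarith)
  · -- r > 0 : use d = 2r > 0, first disjunct
    refine ⟨2 * r, by positivity, F', hmeas, hposμ, ?_, ?_⟩
    · have hsub : F' ⊆ {x | (Real.toNNReal (r : ℝ)) ≤ ‖F x‖₊} := by
        intro x hx
        have h1 : ((r : ℝ)) ≤ ‖F x‖ := by
          rw [Real.norm_eq_abs]
          have := le_abs_self (F x)
          linarith [hx.2]
        have h2 : ((Real.toNNReal ((r : ℝ))) : ℝ) ≤ (‖F x‖₊ : ℝ) := by
          rw [Real.coe_toNNReal _ (by linarith), coe_nnnorm]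
          exact h1
        exact_mod_cast h2
      refine lt_of_le_of_lt (measure_mono hsub) ?_
      exact hF.meas_ge_lt_top hp0 hp' (Real.toNNReal_pos.mpr (by linarith)).ne'
    · left
      filter_upwards [hfF, hgG] with x hfx hgx hx
      obtain ⟨h1, h2⟩ := hx
      constructor
      · rw [hfx]; exact key1 (by linarith) (by linarith)
      · rw [hgx]; exact key2 (by linarith) (by linarith)

theorem stmt14 {Ω : Type*} [MeasurableSpace Ω] (μ : Measure Ω) [SigmaFinite μ]
    (hatomless : ∀ s : Set Ω, MeasurableSet s → 0 < μ s →
      ∃ t ⊆ s, MeasurableSet t ∧ 0 < μ t ∧ μ t < μ s)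
    (p : ℝ≥0∞) (hp : 1 ≤ p) (hp' : p ≠ ∞)
    (f g : Ω → ℝ) (hf : MemLp f p μ) (hg : MemLp g p μ)
    (hfg : ¬ f =ᵐ[μ] g) :
    ∃ d : ℝ, d ≠ 0 ∧ ∃ F' : Set Ω, MeasurableSet F' ∧ 0 < μ F' ∧ μ F' < ∞ ∧
      ((∀ᵐ x ∂μ, x ∈ F' → |f x - d| < |f x| ∧ |g x| < |g x - d|) ∨
       (∀ᵐ x ∂μ, x ∈ F' → |g x - d| < |g x| ∧ |f x| < |f x - d|)) := by
  classical
  obtain ⟨F, hFm, hfF⟩ : ∃ F, Measurable F ∧ f =ᵐ[μ] F :=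
    ⟨hf.1.mk f, hf.1.measurable_mk, hf.1.ae_eq_mk⟩
  obtain ⟨G, hGm, hgG⟩ : ∃ G, Measurable G ∧ g =ᵐ[μ] G :=
    ⟨hg.1.mk g, hg.1.measurable_mk, hg.1.ae_eq_mk⟩
  have hFp : MemLp F p μ := hf.ae_eq hfF
  have hGp : MemLp G p μ := hg.ae_eq hgG
  set D : Set Ω := {x | F x ≠ G x} with hD
  have hDpos : μ D ≠ 0 := by
    intro h
    have hFG : F =ᵐ[μ] G := h
    exact hfg (hfF.trans (hFG.trans hgG.symm))
  have hsub : D ⊆ ⋃ r : {q : ℚ // q ≠ 0},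
      ({x | G x < ((r : ℚ) : ℝ) ∧ ((r : ℚ) : ℝ) < F x} ∪
       {x | F x < ((r : ℚ) : ℝ) ∧ ((r : ℚ) : ℝ) < G x}) := by
    intro x hx
    rcases lt_or_gt_of_ne (hx : F x ≠ G x) with hlt | hgt
    · obtain ⟨q, hq0, hq1, hq2⟩ := rat_btwn hlt
      exact Set.mem_iUnion.mpr ⟨⟨q, hq0⟩, Or.inr ⟨hq1, hq2⟩⟩
    · obtain ⟨q, hq0, hq1, hq2⟩ := rat_btwn hgt
      exact Set.mem_iUnion.mpr ⟨⟨q, hq0⟩, Or.inl ⟨hq1, hq2⟩⟩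
  have : ∃ r : {q : ℚ // q ≠ 0},
      μ ({x | G x < ((r : ℚ) : ℝ) ∧ ((r : ℚ) : ℝ) < F x} ∪
         {x | F x < ((r : ℚ) : ℝ) ∧ ((r : ℚ) : ℝ) < G x}) ≠ 0 := by
    by_contra hcon
    push_neg at hcon
    exact hDpos (measure_mono_null hsub (measure_iUnion_null hcon))
  obtain ⟨⟨r, hr⟩, hrpos⟩ := this
  have : μ {x | G x < (r : ℝ) ∧ (r : ℝ) < F x} ≠ 0 ∨
      μ {x | F x < (r : ℝ) ∧ (r : ℝ) < G x} ≠ 0 := by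
    by_contra hcon
    push_neg at hcon
    exact hrpos (measure_union_null hcon.1 hcon.2)
  rcases this with hcase | hcase
  · exact aux μ p hp hp' f g F G hFm hGm hFp hGp hfF hgG r hr hcase
  · obtain ⟨d, hd, F', h1, h2, h3, h4⟩ :=
      aux μ p hp hp' g f G F hGm hFm hGp hFp hgG hfF r hr hcase
    exact ⟨d, hd, F', h1, h2, h3, h4.symm⟩
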